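/- Let $R$ be a formally real commutative ring (i.e., $-1$ is not a sum of squares in $R$). Let $\Sigma$ denote the set of sums of squares in $R$, and let $I$ be an ideal of $R$ that is maximal with respect to the property of being disjoint from $1 + \Sigma$. Then $I$ is a prime real ideal. -/

import Mathlib

private lemma sqMulIsSumSq {R : Type*} [CommRing R] (a : R) {t : R} (ht : IsSumSq t) :
    IsSumSq (a * a * t) := by
  induction ht with
  | zero => simpa using IsSumSq.zero
  | @sq_add b T _ ih =>
    have : a * a * (b * b + T) = (a * b) * (a * b) + a * a * T := by ring
    rw [this]; exact IsSumSq.sq_add _ ih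

private lemma IsSumSq.mul' {R : Type*} [CommRing R] {s t : R} (hs : IsSumSq s)
    (ht : IsSumSq t) : IsSumSq (s * t) := by
  induction hs with
  | zero => simpa using IsSumSq.zero
  | @sq_add a S _ ih =>
    have : (a * a + S) * t = a * a * t + S * t := by ring
    rw [this]; exact (sqMulIsSumSq a ht).add ih

/-- In a formally real commutative ring, an ideal maximal with respect to
being disjoint from `1 + Σ` (Σ the sums of squares) is a prime real ideal. -/
theorem stmt_7 (R : Type*) [CommRing R] (hR : ¬ IsSumSq (-1 : R))
    (I : Ideal R)
    (hdisj : ∀ s : R, IsSumSq s → 1 + s ∉ I)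
    (hmax : ∀ J : Ideal R, I ≤ J → (∀ s : R, IsSumSq s → 1 + s ∉ J) → J = I) :
    I.IsPrime ∧ ∀ (n : ℕ) (u : Fin n → R), (∑ i, u i ^ 2) ∈ I → ∀ i, u i ∈ I := by
  -- the multiplicative set 1 + Σ
  set S : Submonoid R :=
    { carrier := {x | ∃ s, IsSumSq s ∧ x = 1 + s}
      one_mem' := ⟨0, IsSumSq.zero, by ring⟩
      mul_mem' := by
        rintro x y ⟨s, hs, rfl⟩ ⟨t, ht, rfl⟩
        refine ⟨s + t + s * t, (hs.add ht).add (hs.mul' ht), by ring⟩ } with hS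
  have hdisjS : Disjoint (I : Set R) (S : Set R) := by
    rw [Set.disjoint_right]
    rintro x ⟨s, hs, rfl⟩
    exact hdisj s hs
  -- general step: any ideal strictly containing I meets 1 + Σ
  have key : ∀ J : Ideal R, I < J → ∃ s, IsSumSq s ∧ 1 + s ∈ J := by
    intro J hJ
    by_contra h
    push_neg at h
    exact hJ.ne' (hmax J hJ.le (fun s hs hmem => h s hs hmem))
  have hprime : I.IsPrime := by
    apply Ideal.isPrime_of_maximally_disjoint I S hdisjS
    intro J hJ
    obtain ⟨s, hs, hmem⟩ := key J hJ
    rw [Set.not_disjoint_iff]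
    exact ⟨1 + s, hmem, ⟨s, hs, rfl⟩⟩
  refine ⟨hprime, ?_⟩
  intro n u hsum j
  by_contra hj
  obtain ⟨s, hs, hmem⟩ := key (I ⊔ Ideal.span {u j})
    (Submodule.lt_sup_iff_notMem.mpr hj)
  rw [Submodule.mem_sup] at hmem
  obtain ⟨a, ha, b, hb, hab⟩ := hmem
  rw [Ideal.mem_span_singleton'] at hb
  obtain ⟨r, rfl⟩ := hb
  -- (1+s)^2 + r^2 * (∑_{i≠j} u_i^2) ∈ I
  have hrest : (∑ i ∈ Finset.univ.erase j, (r * u i) * (r * u i))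
      = r ^ 2 * (∑ i, u i ^ 2) - r ^ 2 * (u j) ^ 2 := by
    rw [← Finset.add_sum_erase _ _ (Finset.mem_univ j), mul_add, add_sub_cancel_left,
      Finset.mul_sum]
    exact Finset.sum_congr rfl fun i _ => by ring
  have hmemI : (1 + s) ^ 2 + (∑ i ∈ Finset.univ.erase j, (r * u i) * (r * u i)) ∈ I := by
    rw [hrest]
    have : (1 + s) ^ 2 + (r ^ 2 * (∑ i, u i ^ 2) - r ^ 2 * (u j) ^ 2)
        = a * (a + 2 * (r * u j)) + r ^ 2 * (∑ i, u i ^ 2) := by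
      rw [← hab]; ring
    rw [this]
    exact I.add_mem (I.mul_mem_right _ ha) (I.mul_mem_left _ hsum)
  have heq : (1 + s) ^ 2 + (∑ i ∈ Finset.univ.erase j, (r * u i) * (r * u i))
      = 1 + ((s + s + s * s) + ∑ i ∈ Finset.univ.erase j, (r * u i) * (r * u i)) := by
    ring
  rw [heq] at hmemI
  exact hdisj _ (((hs.add hs).add (hs.mul' hs)).add
    (IsSumSq.sum_mul_self _ _)) hmemI
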